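/- For every integer n ≥ 2, all integers i,j ≥ 0 with i + j > 0, and every λ in the open interval ((n−1)/n, n/(n−1)), one has σ_{i,j}(λ) ≠ 0; i.e., the family of product metrics g_λ on Sⁿ × Sⁿ has no degeneracy instants in the interval ((n−1)/n, n/(n−1)). -/

import Mathlib

theorem stmt_15
    (n : ℕ) (hn : 2 ≤ n)
    (σ : ℕ → ℕ → ℝ → ℝ)
    (hσ : ∀ (i j : ℕ) (l : ℝ), 0 < l →
      σ i j l = (1 / l) * ((j : ℝ) * ((j : ℝ) + (n : ℝ) - 1) -
        (n : ℝ) * ((n : ℝ) - 1) / (2 * (n : ℝ) - 1)) +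
        (i : ℝ) * ((i : ℝ) + (n : ℝ) - 1) - (n : ℝ) * ((n : ℝ) - 1) / (2 * (n : ℝ) - 1)) :
    ∀ i j : ℕ, 0 < i + j → ∀ l : ℝ,
      ((n : ℝ) - 1) / (n : ℝ) < l → l < (n : ℝ) / ((n : ℝ) - 1) → σ i j l ≠ 0 := by
  intro i j hij l hl1 hl2
  have hN : (2:ℝ) ≤ (n:ℝ) := by exact_mod_cast hn
  have hN0 : (0:ℝ) < (n:ℝ) := by linarith
  have hN1 : (0:ℝ) < (n:ℝ) - 1 := by linarith
  have h2N : (0:ℝ) < 2 * (n:ℝ) - 1 := by linarith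
  have hl0 : 0 < l := lt_trans (div_pos hN1 hN0) hl1
  have hl1' : (n:ℝ) - 1 < l * (n:ℝ) := by
    rw [div_lt_iff₀ hN0] at hl1; linarith
  have hl2' : l * ((n:ℝ) - 1) < (n:ℝ) := by
    rw [lt_div_iff₀ hN1] at hl2; linarith
  rw [hσ i j l hl0]
  set N := (n:ℝ)
  set I := (i:ℝ) * ((i:ℝ) + N - 1) with hI
  set J := (j:ℝ) * ((j:ℝ) + N - 1) with hJ
  have key : 0 < (J * (2 * N - 1) - N * (N - 1)) + l * (I * (2 * N - 1) - N * (N - 1)) := by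
    have hImon : 1 ≤ i → N ≤ I := by
      intro h1
      have : (1:ℝ) ≤ (i:ℝ) := by exact_mod_cast h1
      rw [hI]; nlinarith
    have hJmon : 1 ≤ j → N ≤ J := by
      intro h1
      have : (1:ℝ) ≤ (j:ℝ) := by exact_mod_cast h1
      rw [hJ]; nlinarith
    rcases Nat.eq_zero_or_pos i with hi | hi
    · have hj : 1 ≤ j := by omega
      have hJ' := hJmon hj
      have hI0 : I = 0 := by rw [hI, hi]; push_cast; ring
      rw [hI0]
      nlinarith [mul_pos hl0 hN1]
    · rcases Nat.eq_zero_or_pos j with hj | hj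
      · have hI' := hImon hi
        have hJ0 : J = 0 := by rw [hJ, hj]; push_cast; ring
        rw [hJ0]
        nlinarith [mul_pos hl0 h2N, mul_lt_mul_of_pos_right hl1' hN1]
      · have hI' := hImon hi
        have hJ' := hJmon hj
        nlinarith [mul_pos hl0 h2N]
  have heq : (1 / l) * (J - N * (N - 1) / (2 * N - 1)) + I - N * (N - 1) / (2 * N - 1)
      = ((J * (2 * N - 1) - N * (N - 1)) + l * (I * (2 * N - 1) - N * (N - 1)))
        / (l * (2 * N - 1)) := by
    rw [eq_div_iff (mul_pos hl0 h2N).ne']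
    field_simp
    linear_combination (-(1 + l) * N * (N - 1)) * mul_inv_cancel₀ h2N.ne'
  rw [heq]
  exact ne_of_gt (div_pos key (mul_pos hl0 h2N))
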